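/- Consider a congestion game with players N, strategies S_i ⊆ 2^E, linear latencies l_e(x) = a_e·x + b_e with a_e, b_e ≥ 0, and define Φ^ε(A) = (1/2)Σ_e (a_e·n_e(A) + b_e)·n_e(A) + (1/2)·((1−ε)/(1+ε))·Σ_e (a_e + b_e)·n_e(A), where n_e(A) is the number of players using e in A. If profile A is a local minimum of Φ^ε (i.e., Φ^ε(P_i, A_{−i}) ≥ Φ^ε(A) for every player i and every P_i ∈ S_i), then A is an ε-Nash equilibrium: c_i(A) ≤ (1+ε)·c_i(P_i, A_{−i}) for all i and all P_i ∈ S_i, where c_i(A) = Σ_{e ∈ A_i} (a_e·n_e(A) + b_e). -/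

import Mathlib

/-- Number of players using facility `e` in profile `A`. -/
def nCount {N E : Type*} [Fintype N] [DecidableEq E] (A : N → Finset E) (e : E) : ℕ :=
  (Finset.univ.filter fun i => e ∈ A i).card

/-- Cost of player `i` in profile `A` with linear latencies. -/
noncomputable def playerCost {N E : Type*} [Fintype N] [DecidableEq E]
    (a b : E → ℝ) (A : N → Finset E) (i : N) : ℝ :=
  ∑ e ∈ A i, (a e * (nCount A e : ℝ) + b e)

/-- The ε-potential function. -/
noncomputable def epsPotential {N E : Type*} [Fintype N] [Fintype E] [DecidableEq E]
    (ε : ℝ) (a b : E → ℝ) (A : N → Finset E) : ℝ :=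
  (1 / 2) * ∑ e : E, (a e * (nCount A e : ℝ) + b e) * (nCount A e : ℝ) +
    (1 / 2) * ((1 - ε) / (1 + ε)) * ∑ e : E, (a e + b e) * (nCount A e : ℝ)

lemma nCount_erase {N E : Type*} [Fintype N] [DecidableEq N] [DecidableEq E]
    (A : N → Finset E) (i : N) (e : E) :
    (nCount A e : ℝ) = (((Finset.univ.erase i).filter fun j => e ∈ A j).card : ℝ)
      + (if e ∈ A i then 1 else 0) := by
  have hi : i ∉ (Finset.univ.erase i : Finset N) := Finset.notMem_erase i _
  unfold nCount
  rw [← Finset.insert_erase (Finset.mem_univ i), Finset.filter_insert]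
  by_cases h : e ∈ A i
  · rw [if_pos h, Finset.card_insert_of_notMem (fun hmem => hi (Finset.mem_filter.mp hmem).1)]
    push_cast
    simp [h]
  · rw [if_neg h]
    simp [h]

lemma nCount_update {N E : Type*} [Fintype N] [DecidableEq N] [DecidableEq E]
    (A : N → Finset E) (i : N) (P : Finset E) (e : E) :
    (nCount (Function.update A i P) e : ℝ) =
      (nCount A e : ℝ) + (if e ∈ P then 1 else 0) - (if e ∈ A i then 1 else 0) := by
  rw [nCount_erase A i e, nCount_erase (Function.update A i P) i e]
  have h1 : ((Finset.univ.erase i).filter fun j => e ∈ Function.update A i P j)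
      = ((Finset.univ.erase i).filter fun j => e ∈ A j) := by
    apply Finset.filter_congr
    intro j hj
    rw [Function.update_of_ne (Finset.mem_erase.mp hj).1]
  rw [h1, Function.update_self]
  ring

lemma one_le_nCount {N E : Type*} [Fintype N] [DecidableEq E]
    (A : N → Finset E) (i : N) (e : E) (he : e ∈ A i) : (1 : ℝ) ≤ (nCount A e : ℝ) := by
  have : 0 < nCount A e := Finset.card_pos.mpr ⟨i, Finset.mem_filter.mpr ⟨Finset.mem_univ i, he⟩⟩
  exact_mod_cast this

theorem stmt_15 {N E : Type*} [Fintype N] [DecidableEq N] [Fintype E] [DecidableEq E]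
    (ε : ℝ) (hε : 0 ≤ ε) (a b : E → ℝ) (ha : ∀ e, 0 ≤ a e) (hb : ∀ e, 0 ≤ b e)
    (S : N → Finset (Finset E)) (A : N → Finset E) (hA : ∀ i, A i ∈ S i)
    (hmin : ∀ i : N, ∀ P ∈ S i,
      epsPotential ε a b A ≤ epsPotential ε a b (Function.update A i P)) :
    ∀ i : N, ∀ P ∈ S i,
      playerCost a b A i ≤ (1 + ε) * playerCost a b (Function.update A i P) i := by
  intro i P hP
  set A' := Function.update A i P with hA'
  have hε1 : (0 : ℝ) < 1 + ε := by linarith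
  set lam : ℝ := (1 - ε) / (1 + ε) with hlam
  set c : ℝ := ε / (1 + ε) with hc
  have hc_nonneg : 0 ≤ c := div_nonneg hε (le_of_lt hε1)
  have hlam_eq : (1 - lam) / 2 = c := by
    rw [hlam, hc]
    field_simp
    ring
  -- potential difference identity
  have hpot : epsPotential ε a b A' - epsPotential ε a b A =
      (∑ e ∈ P, ((a e * (nCount A' e : ℝ) + b e) - c * (a e + b e)))
      - (∑ e ∈ A i, ((a e * (nCount A e : ℝ) + b e) - c * (a e + b e))) := by
    have key : ∀ e : E,
        ((1/2) * ((a e * (nCount A' e : ℝ) + b e) * (nCount A' e : ℝ))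
          + (1/2) * lam * ((a e + b e) * (nCount A' e : ℝ)))
        - ((1/2) * ((a e * (nCount A e : ℝ) + b e) * (nCount A e : ℝ))
          + (1/2) * lam * ((a e + b e) * (nCount A e : ℝ)))
        = (if e ∈ P then (a e * (nCount A' e : ℝ) + b e) - c * (a e + b e) else 0)
          - (if e ∈ A i then (a e * (nCount A e : ℝ) + b e) - c * (a e + b e) else 0) := by
      intro e
      have hupd := nCount_update A i P e
      rw [← hA'] at hupd
      by_cases hP' : e ∈ P <;> by_cases hAi : e ∈ A i <;>
        simp only [hP', hAi, if_true, if_false] at hupd ⊢ <;>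
        first
          | (rw [hupd, ← hlam_eq]; ring)
          | (rw [hupd]; ring)
    have hsum : ∑ e : E, (((1/2) * ((a e * (nCount A' e : ℝ) + b e) * (nCount A' e : ℝ))
          + (1/2) * lam * ((a e + b e) * (nCount A' e : ℝ)))
        - ((1/2) * ((a e * (nCount A e : ℝ) + b e) * (nCount A e : ℝ))
          + (1/2) * lam * ((a e + b e) * (nCount A e : ℝ))))
        = ∑ e : E, ((if e ∈ P then (a e * (nCount A' e : ℝ) + b e) - c * (a e + b e) else 0)
          - (if e ∈ A i then (a e * (nCount A e : ℝ) + b e) - c * (a e + b e) else 0)) :=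
      Finset.sum_congr rfl fun e _ => key e
    have h1 : ∑ e : E, (if e ∈ P then (a e * (nCount A' e : ℝ) + b e) - c * (a e + b e) else 0)
        = ∑ e ∈ P, ((a e * (nCount A' e : ℝ) + b e) - c * (a e + b e)) := by
      rw [Finset.sum_ite_mem, Finset.univ_inter]
    have h2 : ∑ e : E, (if e ∈ A i then (a e * (nCount A e : ℝ) + b e) - c * (a e + b e) else 0)
        = ∑ e ∈ A i, ((a e * (nCount A e : ℝ) + b e) - c * (a e + b e)) := by
      rw [Finset.sum_ite_mem, Finset.univ_inter]
    have := hsum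
    rw [Finset.sum_sub_distrib, Finset.sum_sub_distrib, h1, h2] at this
    rw [epsPotential, epsPotential, ← this]
    rw [Finset.sum_add_distrib, Finset.sum_add_distrib, Finset.mul_sum, Finset.mul_sum,
      Finset.mul_sum, Finset.mul_sum]
    try ring
  have hdiff : 0 ≤ epsPotential ε a b A' - epsPotential ε a b A :=
    sub_nonneg.mpr (hmin i P hP)
  rw [hpot] at hdiff
  -- expand the sums
  have hsplit1 : ∑ e ∈ P, ((a e * (nCount A' e : ℝ) + b e) - c * (a e + b e))
      = playerCost a b A' i - c * ∑ e ∈ P, (a e + b e) := by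
    have hA'i : A' i = P := Function.update_self i P A
    rw [playerCost, hA'i, Finset.sum_sub_distrib, Finset.mul_sum]
  have hsplit2 : ∑ e ∈ A i, ((a e * (nCount A e : ℝ) + b e) - c * (a e + b e))
      = playerCost a b A i - c * ∑ e ∈ A i, (a e + b e) := by
    rw [playerCost, Finset.sum_sub_distrib, Finset.mul_sum]
  rw [hsplit1, hsplit2] at hdiff
  -- bounds
  have hPnn : 0 ≤ ∑ e ∈ P, (a e + b e) :=
    Finset.sum_nonneg fun e _ => add_nonneg (ha e) (hb e)
  have hAle : ∑ e ∈ A i, (a e + b e) ≤ playerCost a b A i := by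
    rw [playerCost]
    apply Finset.sum_le_sum
    intro e he
    have h1 := one_le_nCount A i e he
    nlinarith [ha e, hb e]
  have hkey : playerCost a b A i ≤ playerCost a b A' i + c * playerCost a b A i := by
    nlinarith [mul_nonneg hc_nonneg hPnn, mul_le_mul_of_nonneg_left hAle hc_nonneg]
  have hcval : c * (1 + ε) = ε := by
    rw [hc]; field_simp
  have h2 : playerCost a b A i * (1 + ε)
      ≤ (playerCost a b A' i + c * playerCost a b A i) * (1 + ε) :=
    mul_le_mul_of_nonneg_right hkey hε1.le
  have h3 : (playerCost a b A' i + c * playerCost a b A i) * (1 + ε)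
      = (1 + ε) * playerCost a b A' i + ε * playerCost a b A i := by
    rw [hc]; field_simp
  linarith
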